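/- In the block-triangular setting below, assume additionally that σ¹ is injective. Then the natural maps — the map Ker τ²/Im σ² → Ker τ/Im σ induced by m² ↦ (0, m²), and the map Ker τ/Im σ → Ker τ̄²¹ induced by (m¹, m²) ↦ [m¹ mod Im σ¹] — are well defined and form a short exact sequence 0 → Ker τ²/Im σ² → Ker τ/Im σ → Ker τ̄²¹ → 0. -/

import Mathlib

/-!
The block-triangular setting: vector spaces `U¹, U², M¹, M², L¹, L²` over a
field `K`, with linear maps `σ¹ : U¹ → M¹`, `τ¹ : M¹ → L¹`, `σ² : U² → M²`,
`τ² : M² → L²`, `σ²¹ : U¹ → M²`, `τ²¹ : M¹ → L²` satisfying `τ¹σ¹ = 0`,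
`τ²σ² = 0` and `τ²¹σ¹ + τ²σ²¹ = 0`.  The combined maps are
`σ(u¹, u²) = (σ¹u¹, σ²¹u¹ + σ²u²)` and `τ(m¹, m²) = (τ¹m¹, τ²¹m¹ + τ²m²)`.
-/

noncomputable section

variable {K : Type*} [Field K]

/-- The block-triangular map `(x, y) ↦ (f x, g x + h y)`. -/
def triMap {A B A' B' : Type*}
    [AddCommGroup A] [Module K A] [AddCommGroup B] [Module K B]
    [AddCommGroup A'] [Module K A'] [AddCommGroup B'] [Module K B']
    (f : A →ₗ[K] A') (g : A →ₗ[K] B') (h : B →ₗ[K] B') :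
    (A × B) →ₗ[K] (A' × B') :=
  LinearMap.prod (f ∘ₗ LinearMap.fst K A B)
    (g ∘ₗ LinearMap.fst K A B + h ∘ₗ LinearMap.snd K A B)

variable {U₁ U₂ M₁ M₂ L₁ L₂ : Type*}
  [AddCommGroup U₁] [Module K U₁] [AddCommGroup U₂] [Module K U₂]
  [AddCommGroup M₁] [Module K M₁] [AddCommGroup M₂] [Module K M₂]
  [AddCommGroup L₁] [Module K L₁] [AddCommGroup L₂] [Module K L₂]

theorem triMap_apply' {A B A' B' : Type*}
    [AddCommGroup A] [Module K A] [AddCommGroup B] [Module K B]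
    [AddCommGroup A'] [Module K A'] [AddCommGroup B'] [Module K B']
    (f : A →ₗ[K] A') (g : A →ₗ[K] B') (h : B →ₗ[K] B') (x : A × B) :
    triMap (K := K) f g h x = (f x.1, g x.1 + h x.2) := rfl

set_option maxHeartbeats 2000000 in
/-- if moreover `σ¹` is injective, then the natural maps
`Ker τ²/Im σ² → Ker τ/Im σ` (induced by `m² ↦ (0, m²)`) and
`Ker τ/Im σ → Ker τ̄²¹` (induced by `(m¹, m²) ↦ [m¹ mod Im σ¹]`, where
`τ̄²¹ : Ker τ¹/Im σ¹ → L²/Im τ²` is induced by `τ²¹`) are well defined and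
form a short exact sequence
`0 → Ker τ²/Im σ² → Ker τ/Im σ → Ker τ̄²¹ → 0`. -/
theorem quotient_short_exact
    (σ₁ : U₁ →ₗ[K] M₁) (τ₁ : M₁ →ₗ[K] L₁)
    (σ₂ : U₂ →ₗ[K] M₂) (τ₂ : M₂ →ₗ[K] L₂)
    (σ₂₁ : U₁ →ₗ[K] M₂) (τ₂₁ : M₁ →ₗ[K] L₂)
    (h₁ : τ₁ ∘ₗ σ₁ = 0) (h₂ : τ₂ ∘ₗ σ₂ = 0)
    (h₂₁ : τ₂₁ ∘ₗ σ₁ + τ₂ ∘ₗ σ₂₁ = 0)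
    (hσ₁ : Function.Injective σ₁) :
    ∃ tbar : (LinearMap.ker τ₁ ⧸
          (LinearMap.range σ₁).comap (LinearMap.ker τ₁).subtype) →ₗ[K]
        (L₂ ⧸ LinearMap.range τ₂),
      (∀ m : LinearMap.ker τ₁,
        tbar (Submodule.Quotient.mk m) = Submodule.Quotient.mk (τ₂₁ (m : M₁))) ∧
      ∃ (ι : (LinearMap.ker τ₂ ⧸
              (LinearMap.range σ₂).comap (LinearMap.ker τ₂).subtype) →ₗ[K]
            (LinearMap.ker (triMap τ₁ τ₂₁ τ₂) ⧸
              (LinearMap.range (triMap σ₁ σ₂₁ σ₂)).comap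
                (LinearMap.ker (triMap τ₁ τ₂₁ τ₂)).subtype))
        (π : (LinearMap.ker (triMap τ₁ τ₂₁ τ₂) ⧸
              (LinearMap.range (triMap σ₁ σ₂₁ σ₂)).comap
                (LinearMap.ker (triMap τ₁ τ₂₁ τ₂)).subtype) →ₗ[K]
            LinearMap.ker tbar),
        (∀ (m : LinearMap.ker τ₂) (y : LinearMap.ker (triMap τ₁ τ₂₁ τ₂)),
          (y : M₁ × M₂) = ((0 : M₁), (m : M₂)) →
          ι (Submodule.Quotient.mk m) = Submodule.Quotient.mk y) ∧
        (∀ (y : LinearMap.ker (triMap τ₁ τ₂₁ τ₂)) (w : LinearMap.ker τ₁)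
            (z : LinearMap.ker tbar),
          (w : M₁) = (y : M₁ × M₂).1 →
          (z : LinearMap.ker τ₁ ⧸
              (LinearMap.range σ₁).comap (LinearMap.ker τ₁).subtype)
            = Submodule.Quotient.mk w →
          π (Submodule.Quotient.mk y) = z) ∧
        Function.Injective ι ∧
        Function.Surjective π ∧
        LinearMap.range ι = LinearMap.ker π := by
  classical
  have hts : ∀ u, τ₂₁ (σ₁ u) = - τ₂ (σ₂₁ u) := by
    intro u
    have h := LinearMap.congr_fun h₂₁ u
    simp only [LinearMap.add_apply, LinearMap.comp_apply, LinearMap.zero_apply] at h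
    exact eq_neg_of_add_eq_zero_left h
  set T := triMap (K := K) τ₁ τ₂₁ τ₂ with hTdef
  set S := triMap (K := K) σ₁ σ₂₁ σ₂ with hSdef
  have mem_kerT : ∀ x : M₁ × M₂,
      x ∈ LinearMap.ker T ↔ τ₁ x.1 = 0 ∧ τ₂₁ x.1 + τ₂ x.2 = 0 := by
    intro x
    rw [LinearMap.mem_ker, hTdef, triMap_apply', Prod.mk_eq_zero]
  have mem_rangeS : ∀ x : M₁ × M₂,
      x ∈ LinearMap.range S ↔ ∃ u₁ u₂, σ₁ u₁ = x.1 ∧ σ₂₁ u₁ + σ₂ u₂ = x.2 := by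
    intro x
    constructor
    · rintro ⟨⟨u₁, u₂⟩, hu⟩
      rw [hSdef, triMap_apply'] at hu
      exact ⟨u₁, u₂, congrArg Prod.fst hu, congrArg Prod.snd hu⟩
    · rintro ⟨u₁, u₂, hu1, hu2⟩
      exact ⟨(u₁, u₂), by rw [hSdef, triMap_apply']; exact Prod.ext hu1 hu2⟩
  set Q₁ := (LinearMap.range σ₁).comap (LinearMap.ker τ₁).subtype with hQ₁
  set f : LinearMap.ker τ₁ →ₗ[K] L₂ ⧸ LinearMap.range τ₂ :=
    (LinearMap.range τ₂).mkQ ∘ₗ τ₂₁ ∘ₗ (LinearMap.ker τ₁).subtype with hfdef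
  have hfker : Q₁ ≤ LinearMap.ker f := by
    rintro ⟨m, hm⟩ ⟨u, hu⟩
    simp only [LinearMap.mem_ker, hfdef, LinearMap.comp_apply, Submodule.subtype_apply,
      Submodule.mkQ_apply, Submodule.Quotient.mk_eq_zero]
    exact ⟨-σ₂₁ u, by rw [map_neg, ← hts u, hu]; rfl⟩
  refine ⟨Q₁.liftQ f hfker, fun m => rfl, ?_⟩
  set tbar := Q₁.liftQ f hfker with htbar
  have tbar_mk : ∀ m : LinearMap.ker τ₁,
      tbar (Submodule.Quotient.mk m) = Submodule.Quotient.mk (τ₂₁ (m : M₁)) := fun m => rfl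
  set QT := (LinearMap.range S).comap (LinearMap.ker T).subtype with hQT
  set Q₂ := (LinearMap.range σ₂).comap (LinearMap.ker τ₂).subtype with hQ₂
  -- the map ι
  set g0 : LinearMap.ker τ₂ →ₗ[K] LinearMap.ker T :=
    LinearMap.codRestrict (LinearMap.ker T)
      ((LinearMap.inr K M₁ M₂) ∘ₗ (LinearMap.ker τ₂).subtype)
      (fun m => (mem_kerT _).2 ⟨map_zero τ₁, by simpa using m.2⟩) with hg0
  have hg0v : ∀ m : LinearMap.ker τ₂, (g0 m : M₁ × M₂) = (0, (m : M₂)) := fun m => rfl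
  have hιker : Q₂ ≤ LinearMap.ker (QT.mkQ ∘ₗ g0) := by
    rintro ⟨m, hm⟩ ⟨u, hu⟩
    simp only [LinearMap.mem_ker, LinearMap.comp_apply, Submodule.mkQ_apply,
      Submodule.Quotient.mk_eq_zero]
    refine Submodule.mem_comap.2 ((mem_rangeS _).2 ⟨0, u, by simp [hg0v], ?_⟩)
    simp only [hg0v, map_zero, zero_add]
    exact hu.trans rfl
  set ι := Q₂.liftQ (QT.mkQ ∘ₗ g0) hιker with hι
  -- the map π
  set a : LinearMap.ker T →ₗ[K] LinearMap.ker τ₁ :=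
    LinearMap.codRestrict (LinearMap.ker τ₁)
      ((LinearMap.fst K M₁ M₂) ∘ₗ (LinearMap.ker T).subtype)
      (fun y => ((mem_kerT _).1 y.2).1) with ha
  have hav : ∀ y : LinearMap.ker T, (a y : M₁) = (y : M₁ × M₂).1 := fun y => rfl
  set p1 : LinearMap.ker T →ₗ[K] _ := Q₁.mkQ ∘ₗ a with hp1
  have hp0mem : ∀ y : LinearMap.ker T, p1 y ∈ LinearMap.ker tbar := by
    intro y
    show tbar (Submodule.Quotient.mk (a y)) = 0
    rw [tbar_mk, Submodule.Quotient.mk_eq_zero]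
    have h2 := ((mem_kerT _).1 y.2).2
    exact ⟨-(y : M₁ × M₂).2, by rw [map_neg, hav, eq_comm]; exact eq_neg_of_add_eq_zero_left h2⟩
  set p0 : LinearMap.ker T →ₗ[K] LinearMap.ker tbar :=
    LinearMap.codRestrict (LinearMap.ker tbar) p1 hp0mem with hp0
  have hπker : QT ≤ LinearMap.ker p0 := by
    rintro y hy
    obtain ⟨u₁, u₂, hu1, hu2⟩ := (mem_rangeS _).1 (Submodule.mem_comap.1 hy)
    simp only [LinearMap.mem_ker]
    apply Subtype.ext
    show Submodule.Quotient.mk (a y) = 0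
    rw [Submodule.Quotient.mk_eq_zero]
    exact Submodule.mem_comap.2 ⟨u₁, hu1.trans rfl⟩
  set π := QT.liftQ p0 hπker with hπ
  refine ⟨ι, π, ?_, ?_, ?_, ?_, ?_⟩
  · -- ι spec
    rintro m y hy
    have : g0 m = y := Subtype.ext (by rw [hg0v, hy])
    show QT.mkQ (g0 m) = _
    rw [this]; rfl
  · -- π spec
    rintro y w z hw hz
    apply Subtype.ext
    show Submodule.Quotient.mk (a y) = z.val
    rw [hz]
    exact congrArg _ (Subtype.ext ((hw.trans (rfl : ((y : M₁ × M₂)).1 = ((a y : M₁)))).symm))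
  · -- ι injective
    rw [← LinearMap.ker_eq_bot, eq_bot_iff]
    intro x hx
    obtain ⟨m, rfl⟩ := Q₂.mkQ_surjective x
    have : g0 m ∈ QT := by
      rw [← Submodule.Quotient.mk_eq_zero]
      exact hx
    obtain ⟨u₁, u₂, hu1, hu2⟩ := (mem_rangeS _).1 (Submodule.mem_comap.1 this)
    have hu1' : σ₁ u₁ = 0 := hu1.trans rfl
    have hu2' : σ₂₁ u₁ + σ₂ u₂ = (m : M₂) := hu2.trans rfl
    have hu₁0 : u₁ = 0 := hσ₁ (by rw [hu1', map_zero])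
    rw [hu₁0, map_zero, zero_add] at hu2'
    show Q₂.mkQ m ∈ (⊥ : Submodule K _)
    rw [Submodule.mem_bot, Submodule.mkQ_apply, Submodule.Quotient.mk_eq_zero]
    exact Submodule.mem_comap.2 ⟨u₂, hu2'.trans rfl⟩
  · -- π surjective
    intro z
    obtain ⟨w, hw⟩ := Q₁.mkQ_surjective (z : _)
    have hz0 : tbar (Submodule.Quotient.mk w) = 0 := by
      have h' : tbar (Q₁.mkQ w) = 0 := by rw [hw]; exact LinearMap.mem_ker.1 z.2
      exact h'
    rw [tbar_mk, Submodule.Quotient.mk_eq_zero] at hz0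
    obtain ⟨m₂, hm₂⟩ := hz0
    have hyk : ((w : M₁), -m₂) ∈ LinearMap.ker T :=
      (mem_kerT _).2 ⟨w.2, by rw [map_neg, hm₂]; exact add_neg_cancel _⟩
    refine ⟨Submodule.Quotient.mk ⟨((w : M₁), -m₂), hyk⟩, ?_⟩
    apply Subtype.ext
    show Submodule.Quotient.mk (a ⟨((w : M₁), -m₂), hyk⟩) = z.val
    rw [← hw, Submodule.mkQ_apply]
    exact congrArg _ (Subtype.ext rfl)
  · -- range ι = ker π
    apply le_antisymm
    · rintro _ ⟨q, rfl⟩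
      obtain ⟨m, rfl⟩ := Q₂.mkQ_surjective q
      rw [LinearMap.mem_ker]
      show π (QT.mkQ (g0 m)) = 0
      apply Subtype.ext
      show Submodule.Quotient.mk (a (g0 m)) = 0
      rw [Submodule.Quotient.mk_eq_zero]
      exact Submodule.mem_comap.2 ⟨0, by rw [map_zero]; rfl⟩
    · intro x hx
      obtain ⟨y, rfl⟩ := QT.mkQ_surjective x
      rw [LinearMap.mem_ker] at hx
      have hx' : Submodule.Quotient.mk (a y) = (0 : _) := congrArg Subtype.val hx
      rw [Submodule.Quotient.mk_eq_zero] at hx'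
      obtain ⟨u₁, hu₁0⟩ := Submodule.mem_comap.1 hx'
      have hu₁ : σ₁ u₁ = (y : M₁ × M₂).1 := hu₁0.trans rfl
      have hmk : (y : M₁ × M₂).2 - σ₂₁ u₁ ∈ LinearMap.ker τ₂ := by
        have h2 := ((mem_kerT _).1 y.2).2
        rw [LinearMap.mem_ker, map_sub, sub_eq_add_neg, ← hts u₁, hu₁, add_comm]
        exact h2
      have hy'k : ((0 : M₁), (y : M₁ × M₂).2 - σ₂₁ u₁) ∈ LinearMap.ker T :=
        (mem_kerT _).2 ⟨map_zero τ₁, by simpa using hmk⟩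
      refine ⟨Submodule.Quotient.mk (⟨(y : M₁ × M₂).2 - σ₂₁ u₁, hmk⟩ : LinearMap.ker τ₂), ?_⟩
      show QT.mkQ (g0 ⟨(y : M₁ × M₂).2 - σ₂₁ u₁, hmk⟩) = QT.mkQ y
      rw [Submodule.mkQ_apply, Submodule.mkQ_apply, Submodule.Quotient.eq]
      refine Submodule.mem_comap.2 ((mem_rangeS _).2 ⟨-u₁, 0, ?_, ?_⟩)
      · show σ₁ (-u₁) = ((0 : M₁) - (y : M₁ × M₂).1 : M₁)
        rw [map_neg, hu₁, zero_sub]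
      · show σ₂₁ (-u₁) + σ₂ 0 = (((y : M₁ × M₂).2 - σ₂₁ u₁) - (y : M₁ × M₂).2 : M₂)
        rw [map_zero, map_neg, add_zero]
        abel
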